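/- Let A be infinite and Λ ⊆ Σ_A a shift space (closed, shift-invariant, with the infinite-extension property). Then the set Λ^inf of infinite sequences in Λ is dense in Λ. -/

import Mathlib

open Set Filter Topology

/-- Elements of the full shift `Σ_A`: `Option`-valued sequences that stay `none`
once they are `none` (so they are either everywhere-defined infinite sequences,
or finite words followed by `none`s; the empty word is the all-`none` sequence). -/
def IsWordFun {A : Type*} (x : ℕ → Option A) : Prop :=
  ∀ m n : ℕ, m ≤ n → x m = none → x n = none

/-- The full shift `Σ_A = A^ℕ ∪ {finite words over A}`. -/
def FullShift (A : Type*) : Type _ := {x : ℕ → Option A // IsWordFun x}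

namespace FullShift

variable {A B : Type*}

/-- The length of an element of the full shift, in `ℕ∞`. -/
noncomputable def len (x : FullShift A) : ℕ∞ :=
  sInf {n : ℕ∞ | ∃ m : ℕ, n = (m : ℕ∞) ∧ x.1 m = none}

/-- The shift map `σ`, deleting the first letter. -/
def shift (x : FullShift A) : FullShift A :=
  ⟨fun n => x.1 (n + 1), fun m n h hm => x.2 (m + 1) (n + 1) (by omega) hm⟩

/-- The empty word `∅`. -/
def emptyWord : FullShift A := ⟨fun _ => none, fun _ _ _ _ => rfl⟩

/-- The finite word determined by a list. -/
def word (l : List A) : FullShift A :=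
  ⟨fun n => l[n]?, by
    intro m n h hm
    rw [List.getElem?_eq_none_iff] at hm ⊢
    omega⟩

/-- The infinite sequence determined by a function `ℕ → A`. -/
def infSeq (g : ℕ → A) : FullShift A :=
  ⟨fun n => some (g n), by intro m n _ hm; simp at hm⟩

/-- Generalized cylinder set `Z(w, F)`: elements beginning with the finite word `w`
whose next letter, if any, does not lie in the finite set `F`. -/
def Cyl (w : List A) (F : Finset A) : Set (FullShift A) :=
  {y | (∀ i < w.length, y.1 i = w[i]?) ∧ ∀ a ∈ F, y.1 w.length ≠ some a}

/-- The topology on `Σ_A` generated by the generalized cylinder sets. -/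
instance : TopologicalSpace (FullShift A) :=
  TopologicalSpace.generateFrom {S | ∃ (w : List A) (F : Finset A), S = Cyl w F}

/-- A shift space: closed, shift-invariant, with the infinite-extension property. -/
def IsShiftSpace (Λ : Set (FullShift A)) : Prop :=
  IsClosed Λ ∧ (∀ x ∈ Λ, shift x ∈ Λ) ∧
    ∀ x ∈ Λ, ∀ n : ℕ, len x = (n : ℕ∞) →
      {a : A | ∃ z ∈ Λ, (∀ i < n, z.1 i = x.1 i) ∧ z.1 n = some a}.Infinite

/-- `u` occurs as a subblock of `x`. -/
def Occurs (u : List A) (x : FullShift A) : Prop :=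
  ∃ i : ℕ, ∀ j < u.length, x.1 (i + j) = u[j]?

/-- The infinite sequences avoiding every word in `Fb` as a subblock. -/
def XinfL (Fb : Set (List A)) : Set (FullShift A) :=
  {x | (∀ n, x.1 n ≠ none) ∧ ∀ u ∈ Fb, ¬ Occurs u x}

/-- The shift space `X_F` determined by the forbidden words `Fb`: the infinite
sequences avoiding `Fb`, together with the finite words `x` such that for
infinitely many `a ∈ A` some extension `x a y` lies in `X_F^inf`. -/
def XL (Fb : Set (List A)) : Set (FullShift A) :=
  XinfL Fb ∪ {x | ∃ n : ℕ, len x = (n : ℕ∞) ∧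
    {a : A | ∃ z ∈ XinfL Fb, (∀ i < n, z.1 i = x.1 i) ∧ z.1 n = some a}.Infinite}

/-- The infinite sequences all of whose length-`N` windows `v` satisfy `ft v = true`
(i.e. avoiding all length-`N` words `w` with `ft w = 0`). -/
def XinfT {N : ℕ} (ft : (Fin N → A) → Bool) : Set (FullShift A) :=
  {x | (∀ n, x.1 n ≠ none) ∧
    ∀ (i : ℕ) (v : Fin N → A), (∀ j : Fin N, x.1 (i + (j : ℕ)) = some (v j)) → ft v = true}

/-- The shift space `X_f` determined by forbidding the length-`N` words `w`
with `ft w = 0`. -/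
def XT {N : ℕ} (ft : (Fin N → A) → Bool) : Set (FullShift A) :=
  XinfT ft ∪ {x | ∃ n : ℕ, len x = (n : ℕ∞) ∧
    {a : A | ∃ z ∈ XinfT ft, (∀ i < n, z.1 i = x.1 i) ∧ z.1 n = some a}.Infinite}

/-- `Y` is an `M`-step shift space: determined by forbidden words of length `M + 1`,
equivalently by a function `g̃ : B^{M+1} → {0,1}`. -/
def IsStepShift (M : ℕ) (Y : Set (FullShift B)) : Prop :=
  ∃ gt : (Fin (M + 1) → B) → Bool, Y = XT gt

/-- `φ` is a conjugacy from `Λ` onto `Y`: bijective, continuous, shift-commuting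
and length-preserving. -/
def IsConjugacy (Λ : Set (FullShift A)) (Y : Set (FullShift B))
    (φ : FullShift A → FullShift B) : Prop :=
  Set.BijOn φ Λ Y ∧ ContinuousOn φ Λ ∧
    (∀ x ∈ Λ, φ (shift x) = shift (φ x)) ∧ ∀ x ∈ Λ, len (φ x) = len x

/-- `Λ` and `Y` are conjugate shift spaces. -/
def Conjugate (Λ : Set (FullShift A)) (Y : Set (FullShift B)) : Prop :=
  ∃ φ : FullShift A → FullShift B, IsConjugacy Λ Y φ

/-- The periodic sequence `(x_1 ⋯ x_M b)^∞` of period `M + 1`. -/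
def per (M : ℕ) (x : Fin M → A) (b : A) : ℕ → A :=
  fun n => if h : n % (M + 1) < M then x ⟨n % (M + 1), h⟩ else b

end FullShift

namespace FullShift

variable {A : Type*}

lemma len_eq_of (x : FullShift A) (n : ℕ) (h1 : ∀ i < n, x.1 i ≠ none)
    (h2 : x.1 n = none) : len x = (n : ℕ∞) := by
  apply le_antisymm
  · exact sInf_le ⟨n, rfl, h2⟩
  · apply le_sInf
    rintro _ ⟨m, rfl, hm⟩
    have hnm : n ≤ m := le_of_not_gt fun hmn => h1 m hmn hm
    exact_mod_cast hnm

lemma nbhd_inf (y : FullShift A) (U : Set (FullShift A))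
    (hU : IsOpen U) (hyU : y ∈ U) :
    ∃ m, ∀ z : FullShift A, (∀ i < m, z.1 i = y.1 i) → z ∈ U := by
  have hU' : TopologicalSpace.GenerateOpen
      {S | ∃ (w : List A) (F : Finset A), S = Cyl w F} U := hU
  clear hU
  revert hyU
  induction hU' with
  | basic S hS =>
    intro hyU
    obtain ⟨w, F, rfl⟩ := hS
    obtain ⟨hpre, hF⟩ := hyU
    refine ⟨w.length + 1, fun z hz => ⟨?_, ?_⟩⟩
    · intro i hi; rw [hz i (by omega)]; exact hpre i hi
    · intro a ha; rw [hz w.length (by omega)]; exact hF a ha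
  | univ => exact fun _ => ⟨0, fun _ _ => trivial⟩
  | inter S T hS hT ihS ihT =>
    intro hyU
    obtain ⟨m1, hm1⟩ := ihS hyU.1
    obtain ⟨m2, hm2⟩ := ihT hyU.2
    exact ⟨max m1 m2, fun z hz =>
      ⟨hm1 z fun i hi => hz i (lt_of_lt_of_le hi (le_max_left _ _)),
       hm2 z fun i hi => hz i (lt_of_lt_of_le hi (le_max_right _ _))⟩⟩
  | sUnion S hS ih =>
    intro hyU
    obtain ⟨T, hT, hyT⟩ := hyU
    obtain ⟨m, hm⟩ := ih T hT hyT
    exact ⟨m, fun z hz => ⟨T, hT, hm z hz⟩⟩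

lemma nbhd_fin (x : FullShift A) (n : ℕ) (h1 : ∀ i < n, x.1 i ≠ none) (h2 : x.1 n = none)
    (U : Set (FullShift A)) (hU : IsOpen U) (hxU : x ∈ U) :
    ∃ G : Finset A, ∀ z : FullShift A, (∀ i < n, z.1 i = x.1 i) →
      (∀ a ∈ G, z.1 n ≠ some a) → z ∈ U := by
  classical
  have hU' : TopologicalSpace.GenerateOpen
      {S | ∃ (w : List A) (F : Finset A), S = Cyl w F} U := hU
  clear hU
  revert hxU
  induction hU' with
  | basic S hS =>
    intro hxU
    obtain ⟨w, F, rfl⟩ := hS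
    obtain ⟨hpre, hF⟩ := hxU
    have hwn : w.length ≤ n := by
      by_contra hlt
      push_neg at hlt
      have := hpre n hlt
      rw [h2, List.getElem?_eq_getElem hlt] at this
      simp at this
    rcases eq_or_lt_of_le hwn with heq | hlt
    · refine ⟨F, fun z hz hzG => ⟨?_, ?_⟩⟩
      · intro i hi; rw [hz i (heq ▸ hi)]; exact hpre i hi
      · intro a ha; rw [heq]; exact hzG a ha
    · refine ⟨∅, fun z hz _ => ⟨?_, ?_⟩⟩
      · intro i hi; rw [hz i (by omega)]; exact hpre i hi
      · intro a ha; rw [hz w.length hlt]; exact hF a ha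
  | univ => exact fun _ => ⟨∅, fun _ _ _ => trivial⟩
  | inter S T hS hT ihS ihT =>
    intro hxU
    obtain ⟨G1, hG1⟩ := ihS hxU.1
    obtain ⟨G2, hG2⟩ := ihT hxU.2
    refine ⟨G1 ∪ G2, fun z hz hzG => ⟨?_, ?_⟩⟩
    · exact hG1 z hz fun a ha => hzG a (Finset.mem_union_left _ ha)
    · exact hG2 z hz fun a ha => hzG a (Finset.mem_union_right _ ha)
  | sUnion S hS ih =>
    intro hxU
    obtain ⟨T, hT, hxT⟩ := hxU
    obtain ⟨G, hG⟩ := ih T hT hxT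
    exact ⟨G, fun z hz hzG => ⟨T, hT, hG z hz hzG⟩⟩

lemma extend (Λ : Set (FullShift A)) (h : IsShiftSpace Λ) {z : FullShift A} (hz : z ∈ Λ) :
    ∃ z' ∈ Λ, (∀ i, z.1 i ≠ none → z'.1 i = z.1 i) ∧
      ∀ m, (∀ i < m, z.1 i ≠ none) → z'.1 m ≠ none := by
  classical
  by_cases hinf : ∀ i, z.1 i ≠ none
  · exact ⟨z, hz, fun i _ => rfl, fun m _ => hinf m⟩
  · push_neg at hinf
    have hex : ∃ i, z.1 i = none := hinf
    set m0 := Nat.find hex with hm0def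
    have hm0 : z.1 m0 = none := Nat.find_spec hex
    have hlt : ∀ i < m0, z.1 i ≠ none := fun i hi => Nat.find_min hex hi
    have hset := h.2.2 z hz m0 (len_eq_of z m0 hlt hm0)
    obtain ⟨a, z', hz', hpre, hza⟩ := hset.nonempty
    refine ⟨z', hz', ?_, ?_⟩
    · intro i hi
      have him : i < m0 := by
        by_contra hge
        exact hi (z.2 m0 i (le_of_not_gt hge) hm0)
      exact hpre i him
    · intro m hm
      have hmm0 : m ≤ m0 := by
        by_contra hgt
        exact hm m0 (lt_of_not_ge hgt) hm0
      rcases eq_or_lt_of_le hmm0 with heq | hlt'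
      · rw [heq, hza]; exact Option.some_ne_none a
      · rw [hpre m hlt']; exact hlt m hlt'

end FullShift

/-- In a shift space `Λ`, the set `Λ^inf` of infinite sequences is dense in `Λ`. -/
theorem stmt5 {A : Type*} [Infinite A] (Λ : Set (FullShift A))
    (h : FullShift.IsShiftSpace Λ) :
    Λ ⊆ closure {x ∈ Λ | ∀ n, x.1 n ≠ none} := by
  classical
  intro x hx
  by_cases hinf : ∀ n, x.1 n ≠ none
  · exact subset_closure ⟨hx, hinf⟩
  · push_neg at hinf
    have hex : ∃ i, x.1 i = none := hinf
    set n := Nat.find hex with hndef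
    have h2 : x.1 n = none := Nat.find_spec hex
    have h1 : ∀ i < n, x.1 i ≠ none := fun i hi => Nat.find_min hex hi
    rw [mem_closure_iff]
    intro U hU hxU
    obtain ⟨G, hG⟩ := FullShift.nbhd_fin x n h1 h2 U hU hxU
    have hset := h.2.2 x hx n (FullShift.len_eq_of x n h1 h2)
    obtain ⟨a, haset, haG⟩ := (hset.diff G.finite_toSet).nonempty
    obtain ⟨z0, hz0Λ, hz0pre, hz0n⟩ := haset
    -- build an infinite extension by recursion
    have step : ∀ z : {z : FullShift A // z ∈ Λ}, ∃ z' : {z : FullShift A // z ∈ Λ},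
        (∀ i, z.1.1 i ≠ none → z'.1.1 i = z.1.1 i) ∧
        ∀ m, (∀ i < m, z.1.1 i ≠ none) → z'.1.1 m ≠ none := by
      rintro ⟨z, hz⟩
      obtain ⟨z', hz', ha1, ha2⟩ := FullShift.extend Λ h hz
      exact ⟨⟨z', hz'⟩, ha1, ha2⟩
    choose nxt hnxt1 hnxt2 using step
    let f : ℕ → {z : FullShift A // z ∈ Λ} :=
      fun k => Nat.rec ⟨z0, hz0Λ⟩ (fun _ zz => nxt zz) k
    have hfs : ∀ k, f (k + 1) = nxt (f k) := fun _ => rfl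
    have hz0def : ∀ i ≤ n, z0.1 i ≠ none := by
      intro i hi hcon
      have := z0.2 i n hi hcon
      rw [hz0n] at this
      simp at this
    have hdef : ∀ k, ∀ i < n + 1 + k, (f k).1.1 i ≠ none := by
      intro k
      induction k with
      | zero => intro i hi; exact hz0def i (by omega)
      | succ k ih =>
        intro i hi
        rcases lt_or_ge i (n + 1 + k) with h' | h'
        · rw [hfs k, hnxt1 (f k) i (ih i h')]
          exact ih i h'
        · rw [hfs k]
          exact hnxt2 (f k) i (fun j hj => ih j (by omega))
    have hcum : ∀ k d, ∀ i < n + 1 + k, (f (k + d)).1.1 i = (f k).1.1 i := by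
      intro k d
      induction d with
      | zero => intro i _; rfl
      | succ d ih =>
        intro i hi
        have : (f (k + d)).1.1 i ≠ none := hdef (k + d) i (by omega)
        rw [show k + (d + 1) = (k + d) + 1 from rfl, hfs (k + d), hnxt1 (f (k + d)) i this]
        exact ih i hi
    have hgex : ∀ i, ∃ b, (f i).1.1 i = some b := by
      intro i
      rcases Option.eq_none_or_eq_some ((f i).1.1 i) with hc | hc
      · exact absurd hc (hdef i i (by omega))
      · exact hc
    choose g hg using hgex
    set y : FullShift A := FullShift.infSeq g with hydef
    have hyval : ∀ i, y.1 i = (f i).1.1 i := fun i => (hg i).symm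
    have hyinf : ∀ i, y.1 i ≠ none := fun i => Option.some_ne_none (g i)
    have hymem : ∀ m, ∀ i < m, (f m).1.1 i = y.1 i := by
      intro m i hi
      rw [hyval i]
      have := hcum i (m - i) i (by omega)
      rwa [show i + (m - i) = m by omega] at this
    have hyΛ : y ∈ Λ := by
      have hycl : y ∈ closure Λ := by
        rw [mem_closure_iff]
        intro V hV hyV
        obtain ⟨m, hm⟩ := FullShift.nbhd_inf y V hV hyV
        exact ⟨(f m).1, hm (f m).1 (hymem m), (f m).2⟩
      exact h.1.closure_subset hycl
    have hyx : ∀ i < n, y.1 i = x.1 i := by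
      intro i hi
      rw [hyval i]
      have := hcum 0 i i (by omega)
      rw [show (0 : ℕ) + i = i from by omega] at this
      rw [this]
      exact hz0pre i hi
    have hyn : y.1 n = some a := by
      rw [hyval n]
      have := hcum 0 n n (by omega)
      rw [show (0 : ℕ) + n = n from by omega] at this
      rw [this]
      exact hz0n
    refine ⟨y, hG y hyx ?_, hyΛ, hyinf⟩
    intro a' ha' hcon
    rw [hyn] at hcon
    exact haG (by rwa [Option.some_inj.mp hcon])
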